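/- Suppose the regularizer depends only on the transfer functions: there is a functional Ω : (Fin p → (ℝ → ℝ)) → ℝ, and the problems are regularized by Ω₁(β) = Ω(j ↦ (x ↦ Σ_{k=1}^m β_{jk} φ_k(x))) for (P1') and Ω₂(β) = Ω(j ↦ (x ↦ Σ_{k=1}^m β_{jk} ψ_{jk}(x))) for (P2'). Assume the constant function 1 lies in the linear span of φ₁, …, φ_m. If β₁ minimizes F₁(β) = Σ_{i=1}^n ( y_i − Σ_j Σ_k β_{jk} φ_k(X_{ij}) )² + Ω₁(β) over all β satisfying the centering constraints Σ_i Σ_k β_{jk} φ_k(X_{ij}) = 0 for every j, and β₂ minimizes F₂(β) = Σ_{i=1}^n ( y_i − Σ_j Σ_k β_{jk} ψ_{jk}(X_{ij}) )² + Ω₂(β) over all β, then F₁(β₁) ≤ F₂(β₂). -/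

import Mathlib

/-- If the regularizer depends only on the transfer functions
(via a functional `Ω` on `Fin p → (ℝ → ℝ)`), and the constant function 1 lies
in the span of the basis, then the optimal value of the constrained problem
(P1') is at most the optimal value of the unconstrained centered problem (P2'). -/
theorem stmt_8 (n p m : ℕ) (hn : 0 < n)
    (X : Fin n → Fin p → ℝ) (y : Fin n → ℝ) (φ : Fin m → ℝ → ℝ)
    (Ω : (Fin p → ℝ → ℝ) → ℝ)
    (c : Fin m → ℝ) (hc : ∀ x : ℝ, ∑ k, c k * φ k x = 1)
    (β₁ β₂ : Fin p → Fin m → ℝ)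
    (hfeas : ∀ j : Fin p, ∑ i, ∑ k, β₁ j k * φ k (X i j) = 0)
    (hmin₁ : ∀ β : Fin p → Fin m → ℝ,
      (∀ j : Fin p, ∑ i, ∑ k, β j k * φ k (X i j) = 0) →
      (∑ i, (y i - ∑ j, ∑ k, β₁ j k * φ k (X i j)) ^ 2) +
        Ω (fun j => fun x => ∑ k, β₁ j k * φ k x) ≤
      (∑ i, (y i - ∑ j, ∑ k, β j k * φ k (X i j)) ^ 2) +
        Ω (fun j => fun x => ∑ k, β j k * φ k x))
    (hmin₂ : ∀ β : Fin p → Fin m → ℝ,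
      (∑ i, (y i - ∑ j, ∑ k, β₂ j k *
          (φ k (X i j) - (1 / (n : ℝ)) * ∑ i', φ k (X i' j))) ^ 2) +
        Ω (fun j => fun x => ∑ k, β₂ j k *
          (φ k x - (1 / (n : ℝ)) * ∑ i', φ k (X i' j))) ≤
      (∑ i, (y i - ∑ j, ∑ k, β j k *
          (φ k (X i j) - (1 / (n : ℝ)) * ∑ i', φ k (X i' j))) ^ 2) +
        Ω (fun j => fun x => ∑ k, β j k *
          (φ k x - (1 / (n : ℝ)) * ∑ i', φ k (X i' j)))) :
    (∑ i, (y i - ∑ j, ∑ k, β₁ j k * φ k (X i j)) ^ 2) +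
      Ω (fun j => fun x => ∑ k, β₁ j k * φ k x) ≤
    (∑ i, (y i - ∑ j, ∑ k, β₂ j k *
        (φ k (X i j) - (1 / (n : ℝ)) * ∑ i', φ k (X i' j))) ^ 2) +
      Ω (fun j => fun x => ∑ k, β₂ j k *
        (φ k x - (1 / (n : ℝ)) * ∑ i', φ k (X i' j))) := by
  set φbar : Fin p → Fin m → ℝ := fun j k => (1 / (n : ℝ)) * ∑ i', φ k (X i' j) with hφbar
  set β' : Fin p → Fin m → ℝ :=
    fun j k => β₂ j k - c k * (∑ k', β₂ j k' * φbar j k') with hβ'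
  have hfun : ∀ j x, ∑ k, β' j k * φ k x = ∑ k, β₂ j k * (φ k x - φbar j k) := by
    intro j x
    simp only [hβ', sub_mul, mul_sub, Finset.sum_sub_distrib]
    congr 1
    calc ∑ k, c k * (∑ k', β₂ j k' * φbar j k') * φ k x
        = (∑ k', β₂ j k' * φbar j k') * ∑ k, c k * φ k x := by
          rw [Finset.mul_sum]; congr 1; ext k; ring
      _ = ∑ k, β₂ j k * φbar j k := by rw [hc x]; ring
  have hfeas' : ∀ j : Fin p, ∑ i, ∑ k, β' j k * φ k (X i j) = 0 := by
    intro j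
    have hn' : (n : ℝ) ≠ 0 := Nat.cast_ne_zero.mpr hn.ne'
    calc ∑ i, ∑ k, β' j k * φ k (X i j)
        = ∑ i, ∑ k, β₂ j k * (φ k (X i j) - φbar j k) := by
          exact Finset.sum_congr rfl fun i _ => hfun j (X i j)
      _ = ∑ k, β₂ j k * ((∑ i, φ k (X i j)) - (n : ℝ) * φbar j k) := by
          rw [Finset.sum_comm]
          refine Finset.sum_congr rfl fun k _ => ?_
          simp only [mul_sub, Finset.sum_sub_distrib, Finset.mul_sum]
          congr 1
          simp [Finset.sum_const]; ring
      _ = 0 := by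
          refine Finset.sum_eq_zero fun k _ => ?_
          simp only [hφbar]
          field_simp
          ring
  have key := hmin₁ β' hfeas'
  have heq1 : (fun j => fun x => ∑ k, β' j k * φ k x) =
      (fun j => fun x => ∑ k, β₂ j k * (φ k x - φbar j k)) := by
    funext j x; exact hfun j x
  calc (∑ i, (y i - ∑ j, ∑ k, β₁ j k * φ k (X i j)) ^ 2) +
      Ω (fun j => fun x => ∑ k, β₁ j k * φ k x)
      ≤ (∑ i, (y i - ∑ j, ∑ k, β' j k * φ k (X i j)) ^ 2) +
        Ω (fun j => fun x => ∑ k, β' j k * φ k x) := key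
    _ = (∑ i, (y i - ∑ j, ∑ k, β₂ j k * (φ k (X i j) - φbar j k)) ^ 2) +
        Ω (fun j => fun x => ∑ k, β₂ j k * (φ k x - φbar j k)) := by
        rw [heq1]
        congr 1
        refine Finset.sum_congr rfl fun i _ => ?_
        congr 2
        exact Finset.sum_congr rfl fun j _ => hfun j (X i j)
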